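/- arXiv:0712.0068 — 4 statements merged into one kernel-verified Lean document; each statement's English description precedes it below -/
import Mathlib

section
/- Let K be a field and S = K[x_1, ..., x_n] the polynomial ring. Every monomial ideal I ⊆ S admits a Stanley decomposition, i.e., I can be written as a finite direct sum of Stanley spaces: I = ⊕_{i=1}^r u_i K[Z_i] as K-vector spaces, where each u_i is a monomial of S and each Z_i ⊆ {x_1, ..., x_n}. -/
open MvPolynomial

/-- The Stanley space `u K[Z]`: the `K`-span of all monomials `u * v` where `v` is a
monomial in the variables of `Z`; the monomial `u` is given by its exponent vector `d`. -/
noncomputable def stanleySpace (K : Type*) [Field K] {σ : Type*} (d : σ →₀ ℕ)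
    (Z : Finset σ) : Submodule K (MvPolynomial σ K) :=
  Submodule.span K
    {m | ∃ e : σ →₀ ℕ, (e.support : Set σ) ⊆ (Z : Set σ) ∧ m = monomial (d + e) (1 : K)}

/-- A monomial ideal: an ideal generated by monomials. -/
def IsMonomialIdeal {K : Type*} [Field K] {σ : Type*}
    (I : Ideal (MvPolynomial σ K)) : Prop :=
  ∃ G : Set (σ →₀ ℕ), I = Ideal.span ((fun d => monomial d (1 : K)) '' G)

/-- A squarefree monomial ideal: an ideal generated by squarefree monomials. -/
def IsSquarefreeMonomialIdeal {K : Type*} [Field K] {σ : Type*}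
    (I : Ideal (MvPolynomial σ K)) : Prop :=
  ∃ G : Set (σ →₀ ℕ), (∀ d ∈ G, ∀ i, d i ≤ 1) ∧
    I = Ideal.span ((fun d => monomial d (1 : K)) '' G)

/-- `I^c`: the `K`-span of all monomials not belonging to `I`. -/
noncomputable def compSpan (K : Type*) [Field K] {σ : Type*}
    (I : Ideal (MvPolynomial σ K)) : Submodule K (MvPolynomial σ K) :=
  Submodule.span K
    {m | ∃ d : σ →₀ ℕ, monomial d (1 : K) ∉ I ∧ m = monomial d (1 : K)}

/-- `x_n^k V ⊆ S`: the image in `S = K[x_1,…,x_n]` of a `K`-subspace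
`V ⊆ S' = K[x_1,…,x_{n-1}]` under inclusion followed by multiplication by `x_n^k`. -/
noncomputable def shiftUp (K : Type*) [Field K] (n : ℕ) (k : ℕ)
    (V : Submodule K (MvPolynomial (Fin n) K)) :
    Submodule K (MvPolynomial (Fin (n + 1)) K) :=
  (V.map (rename (Fin.castSucc : Fin n → Fin (n + 1)) :
      MvPolynomial (Fin n) K →ₐ[K] MvPolynomial (Fin (n + 1)) K).toLinearMap).map
    (LinearMap.mulLeft K ((X (Fin.last n) : MvPolynomial (Fin (n + 1)) K) ^ k))

namespace StanleyAux

def box {n : ℕ} (u : Fin n →₀ ℕ) (Z : Finset (Fin n)) : Set (Fin n →₀ ℕ) :=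
  {c | ∃ e : Fin n →₀ ℕ, (e.support : Set (Fin n)) ⊆ (Z : Set (Fin n)) ∧ c = u + e}

def upSet {n : ℕ} (G : Set (Fin n →₀ ℕ)) : Set (Fin n →₀ ℕ) :=
  {d | ∃ g ∈ G, g ≤ d}

lemma le_iff_tail {n : ℕ} (g d : Fin (n + 1) →₀ ℕ) :
    g ≤ d ↔ g 0 ≤ d 0 ∧ Finsupp.tail g ≤ Finsupp.tail d := by
  simp only [Finsupp.le_def, Finsupp.tail_apply]
  constructor
  · intro h; exact ⟨h 0, fun i => h i.succ⟩
  · rintro ⟨h0, h⟩ i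
    exact Fin.cases h0 (fun j => h j) i

lemma cons_add {n : ℕ} (a b : ℕ) (s t : Fin n →₀ ℕ) :
    Finsupp.cons (a + b) (s + t) = Finsupp.cons a s + Finsupp.cons b t := by
  ext i
  refine Fin.cases ?_ (fun j => ?_) i <;>
    simp [Finsupp.cons_zero, Finsupp.cons_succ]

lemma mem_box_low {n : ℕ} (k : ℕ) (u : Fin n →₀ ℕ) (Z : Finset (Fin n))
    (d : Fin (n + 1) →₀ ℕ) :
    d ∈ box (Finsupp.cons k u) (Z.image Fin.succ) ↔
      d 0 = k ∧ Finsupp.tail d ∈ box u Z := by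
  constructor
  · rintro ⟨e, he, rfl⟩
    have he0 : e 0 = 0 := by
      by_contra h
      have h2 := he (Finsupp.mem_support_iff.2 h)
      simp only [Finset.coe_image, Set.mem_image, Finset.mem_coe] at h2
      obtain ⟨a, -, hj⟩ := h2
      exact Fin.succ_ne_zero a hj
    refine ⟨by simp [Finsupp.cons_zero, he0], Finsupp.tail e, ?_, ?_⟩
    · intro j hj
      have hj' : j.succ ∈ e.support := by
        simpa [Finsupp.tail_apply] using hj
      have h2 := he hj'
      simp only [Finset.coe_image, Set.mem_image, Finset.mem_coe] at h2
      obtain ⟨a, ha, haj⟩ := h2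
      rwa [← Fin.succ_injective n haj]
    · ext j; simp [Finsupp.tail_apply, Finsupp.cons_succ]
  · rintro ⟨h0, e, he, hte⟩
    refine ⟨Finsupp.cons 0 e, ?_, ?_⟩
    · intro i hi
      have hi' : Finsupp.cons 0 e i ≠ 0 := by
        simpa using hi
      rcases Fin.eq_zero_or_eq_succ i with rfl | ⟨j, rfl⟩
      · exact absurd (Finsupp.cons_zero 0 e) hi'
      · rw [Finsupp.cons_succ] at hi'
        have hj : j ∈ Z := he (Finsupp.mem_support_iff.2 hi')
        simp only [Finset.coe_image, Set.mem_image, Finset.mem_coe]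
        exact ⟨j, hj, rfl⟩
    · have hd : d = Finsupp.cons (d 0) (Finsupp.tail d) := (Finsupp.cons_tail ..).symm
      rw [← cons_add]
      rw [add_zero]
      rw [← h0, ← hte]
      exact hd

lemma mem_box_high {n : ℕ} (N : ℕ) (u : Fin n →₀ ℕ) (Z : Finset (Fin n))
    (d : Fin (n + 1) →₀ ℕ) :
    d ∈ box (Finsupp.cons N u) (insert 0 (Z.image Fin.succ)) ↔
      N ≤ d 0 ∧ Finsupp.tail d ∈ box u Z := by
  constructor
  · rintro ⟨e, he, rfl⟩
    refine ⟨by simp [Finsupp.cons_zero], Finsupp.tail e, ?_, ?_⟩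
    · intro j hj
      have hj' : j.succ ∈ e.support := by
        simpa [Finsupp.tail_apply] using hj
      have h2 := he hj'
      simp only [Finset.coe_insert, Set.mem_insert_iff, Finset.coe_image, Set.mem_image,
        Finset.mem_coe] at h2
      rcases h2 with h2 | ⟨a, ha, haj⟩
      · exact absurd h2 (Fin.succ_ne_zero j)
      · rwa [← Fin.succ_injective n haj]
    · ext j; simp [Finsupp.tail_apply, Finsupp.cons_succ]
  · rintro ⟨h0, e, he, hte⟩
    refine ⟨Finsupp.cons (d 0 - N) e, ?_, ?_⟩
    · intro i hi
      rcases Fin.eq_zero_or_eq_succ i with rfl | ⟨j, rfl⟩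
      · simp
      · have hi' : Finsupp.cons (d 0 - N) e j.succ ≠ 0 := by simpa using hi
        rw [Finsupp.cons_succ] at hi'
        have hj : j ∈ Z := he (Finsupp.mem_support_iff.2 hi')
        simp only [Finset.coe_insert, Set.mem_insert_iff, Finset.coe_image, Set.mem_image,
          Finset.mem_coe]
        exact Or.inr ⟨j, hj, rfl⟩
    · have hd : d = Finsupp.cons (d 0) (Finsupp.tail d) := (Finsupp.cons_tail ..).symm
      rw [← cons_add, Nat.add_sub_cancel' h0, ← hte]
      exact hd

lemma exists_box_partition : ∀ (n : ℕ) (G : Finset (Fin n →₀ ℕ)),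
    ∃ (ι : Type) (_ : Fintype ι) (u : ι → (Fin n →₀ ℕ)) (Z : ι → Finset (Fin n)),
      (∀ i j, i ≠ j → Disjoint (box (u i) (Z i)) (box (u j) (Z j))) ∧
      (⋃ i, box (u i) (Z i)) = upSet (G : Set (Fin n →₀ ℕ)) := by
  intro n
  induction n with
  | zero =>
    intro G
    have hz : ∀ d : Fin 0 →₀ ℕ, d = 0 := fun d => Finsupp.ext fun i => i.elim0
    rcases G.eq_empty_or_nonempty with rfl | ⟨g0, hg0⟩
    · refine ⟨Fin 0, inferInstance, fun i => 0, fun i => ∅, fun i => i.elim0, ?_⟩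
      simp [upSet]
    · refine ⟨Fin 1, inferInstance, fun _ => 0, fun _ => ∅, ?_, ?_⟩
      · intro i j hij; exact absurd (Subsingleton.elim i j) hij
      · ext d
        simp only [Set.mem_iUnion, upSet, Set.mem_setOf_eq]
        constructor
        · rintro -
          exact ⟨g0, hg0, le_of_eq (by rw [hz g0, hz d])⟩
        · rintro -
          exact ⟨0, ⟨0, by simp, by rw [hz d, add_zero]⟩⟩
  | succ n ih =>
    intro G
    classical
    set N := G.sup (fun g => g 0) with hN
    set slice : ℕ → Finset (Fin n →₀ ℕ) :=
      fun k => (G.filter fun g => g 0 ≤ k).image Finsupp.tail with hslice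
    choose ι F u Z hdis hcup using fun k : ℕ => ih (slice k)
    haveI : ∀ k, Fintype (ι k) := F
    have key : ∀ d : Fin (n + 1) →₀ ℕ,
        d ∈ upSet (G : Set _) ↔ Finsupp.tail d ∈ upSet (slice (d 0) : Set _) := by
      intro d
      constructor
      · rintro ⟨g, hg, hgd⟩
        rw [le_iff_tail] at hgd
        exact ⟨Finsupp.tail g, by
          simp only [hslice, Finset.coe_image, Set.mem_image, Finset.mem_coe,
            Finset.mem_filter]
          exact ⟨g, ⟨hg, hgd.1⟩, rfl⟩, hgd.2⟩
      · rintro ⟨t, ht, htd⟩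
        simp only [hslice, Finset.coe_image, Set.mem_image, Finset.mem_coe,
          Finset.mem_filter] at ht
        obtain ⟨g, ⟨hg, hg0⟩, rfl⟩ := ht
        exact ⟨g, hg, (le_iff_tail g d).2 ⟨hg0, htd⟩⟩
    have slice_stab : ∀ k, N ≤ k → slice k = slice N := by
      intro k hk
      have h1 : ∀ m, N ≤ m → (G.filter fun g => g 0 ≤ m) = G := by
        intro m hm
        apply Finset.filter_true_of_mem
        intro g hg
        exact le_trans (Finset.le_sup (f := fun g => g 0) hg) hm
      rw [hslice]
      simp only [h1 k hk, h1 N le_rfl]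
    refine ⟨(Σ k : Fin N, ι k) ⊕ ι N, inferInstance,
      Sum.elim (fun p => Finsupp.cons (p.1 : ℕ) (u p.1 p.2)) (fun i => Finsupp.cons N (u N i)),
      Sum.elim (fun p => (Z p.1 p.2).image Fin.succ)
        (fun i => insert 0 ((Z N i).image Fin.succ)), ?_, ?_⟩
    · rintro (⟨k, i⟩ | i) (⟨k', j⟩ | j) hij <;>
        rw [Set.disjoint_left] <;> intro d hd1 hd2 <;>
        simp only [Sum.elim_inl, Sum.elim_inr, mem_box_low, mem_box_high] at hd1 hd2
      · by_cases hkk : k = k'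
        · subst hkk
          have hij' : i ≠ j := by
            intro h; exact hij (by rw [h])
          exact Set.disjoint_left.1 (hdis (k : ℕ) i j hij') hd1.2 hd2.2
        · exact hkk (Fin.val_injective (hd1.1 ▸ hd2.1 ▸ rfl))
      · have h1 := hd1.1
        have h2 := hd2.1
        have h3 := k.isLt
        omega
      · have h1 := hd1.1
        have h2 := hd2.1
        have h3 := k'.isLt
        omega
      · have hij' : i ≠ j := fun h => hij (by rw [h])
        exact Set.disjoint_left.1 (hdis N i j hij') hd1.2 hd2.2
    · ext d
      rw [key d]
      simp only [Set.mem_iUnion]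
      constructor
      · rintro ⟨(⟨k, i⟩ | i), hd⟩
        · simp only [Sum.elim_inl, mem_box_low] at hd
          obtain ⟨hd0, hd1⟩ := hd
          rw [hd0]
          rw [← hcup (k : ℕ)]
          exact Set.mem_iUnion.2 ⟨i, hd1⟩
        · simp only [Sum.elim_inr, mem_box_high] at hd
          obtain ⟨hd0, hd1⟩ := hd
          rw [slice_stab (d 0) hd0, ← hcup N]
          exact Set.mem_iUnion.2 ⟨i, hd1⟩
      · intro hd
        by_cases hdN : d 0 < N
        · rw [← hcup (d 0)] at hd
          obtain ⟨i, hi⟩ := Set.mem_iUnion.1 hd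
          refine ⟨Sum.inl ⟨⟨d 0, hdN⟩, i⟩, ?_⟩
          simp only [Sum.elim_inl, mem_box_low]
          exact ⟨trivial, hi⟩
        · push_neg at hdN
          rw [slice_stab (d 0) hdN, ← hcup N] at hd
          obtain ⟨i, hi⟩ := Set.mem_iUnion.1 hd
          refine ⟨Sum.inr i, ?_⟩
          simp only [Sum.elim_inr, mem_box_high]
          exact ⟨hdN, hi⟩

end StanleyAux

namespace StanleyAux

lemma exists_finset_upSet_eq {n : ℕ} (G : Set (Fin n →₀ ℕ)) :
    ∃ G' : Finset (Fin n →₀ ℕ), upSet (G' : Set (Fin n →₀ ℕ)) = upSet G := by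
  classical
  set M := {g ∈ G | ∀ g' ∈ G, g' ≤ g → g' = g} with hM
  have hanti : IsAntichain (· ≤ ·) M := by
    rintro a ⟨haG, -⟩ b ⟨hbG, hb⟩ hab hle
    exact hab (hb a haG hle)
  have hfin : M.Finite := hanti.finite_of_partiallyWellOrderedOn (Set.isPWO_of_wellQuasiOrderedLE M)
  refine ⟨hfin.toFinset, ?_⟩
  rw [Set.Finite.coe_toFinset]
  apply Set.Subset.antisymm
  · rintro d ⟨g, ⟨hgG, -⟩, hgd⟩
    exact ⟨g, hgG, hgd⟩
  · rintro d ⟨g, hgG, hgd⟩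
    obtain ⟨m, ⟨hmG, hmg⟩, hmin⟩ :=
      (wellFounded_lt (α := Fin n →₀ ℕ)).has_min {g' | g' ∈ G ∧ g' ≤ g} ⟨g, hgG, le_rfl⟩
    refine ⟨m, ⟨hmG, fun g' hg' hle => ?_⟩, le_trans hmg hgd⟩
    by_contra hne
    exact hmin g' ⟨hg', le_trans hle hmg⟩ (lt_of_le_of_ne hle hne)

end StanleyAux

lemma stanleySpace_eq_span (K : Type*) [Field K] {n : ℕ} (d : Fin n →₀ ℕ)
    (Z : Finset (Fin n)) :
    stanleySpace K d Z =
      Submodule.span K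
        ((fun c => (monomial c (1 : K) : MvPolynomial (Fin n) K)) '' StanleyAux.box d Z) := by
  unfold stanleySpace
  congr 1
  ext m
  constructor
  · rintro ⟨e, he, rfl⟩
    exact ⟨d + e, ⟨e, he, rfl⟩, rfl⟩
  · rintro ⟨c, ⟨e, he, rfl⟩, rfl⟩
    exact ⟨e, he, rfl⟩


/-- Every monomial ideal `I ⊆ S = K[x_1,…,x_n]` admits a Stanley
decomposition `I = ⊕_{i=1}^r u_i K[Z_i]` as `K`-vector spaces. -/
theorem monomialIdeal_has_stanley_decomposition (K : Type*) [Field K] (n : ℕ)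
    (I : Ideal (MvPolynomial (Fin n) K)) (hI : IsMonomialIdeal I) :
    ∃ (r : ℕ) (u : Fin r → (Fin n →₀ ℕ)) (Z : Fin r → Finset (Fin n)),
      iSupIndep (fun i => stanleySpace K (u i) (Z i)) ∧
      (⨆ i, stanleySpace K (u i) (Z i)) = Submodule.restrictScalars K I := by
  classical
  obtain ⟨G0, hG0⟩ := hI
  set mono : (Fin n →₀ ℕ) → MvPolynomial (Fin n) K := fun c => monomial c (1 : K) with hmono
  have hsuppmono : ∀ d : Fin n →₀ ℕ, (mono d).support = {d} := by
    intro d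
    rw [hmono]
    simp only [support_monomial, if_neg (one_ne_zero : (1 : K) ≠ 0)]
  -- the set of exponents of monomials in I
  have hE : {d : Fin n →₀ ℕ | mono d ∈ I} = StanleyAux.upSet G0 := by
    ext d
    rw [Set.mem_setOf_eq, hG0, mem_ideal_span_monomial_image]
    constructor
    · intro h
      exact h d (by rw [hsuppmono d]; exact Finset.mem_singleton_self d)
    · rintro ⟨g, hg, hgd⟩ xi hxi
      rw [hsuppmono d, Finset.mem_singleton] at hxi
      exact ⟨g, hg, hxi ▸ hgd⟩
  obtain ⟨G', hG'⟩ := StanleyAux.exists_finset_upSet_eq G0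
  obtain ⟨ι, hF, u, Z, hdis, hun⟩ := StanleyAux.exists_box_partition n G'
  haveI := hF
  set e := Fintype.equivFin ι with he
  have lin : LinearIndependent K mono := by
    have h := (basisMonomials (Fin n) K).linearIndependent
    rwa [coe_basisMonomials] at h
  have h1 : ∀ j : Fin (Fintype.card ι),
      stanleySpace K (u (e.symm j)) (Z (e.symm j)) =
        Submodule.span K (mono '' StanleyAux.box (u (e.symm j)) (Z (e.symm j))) :=
    fun j => stanleySpace_eq_span K _ _
  refine ⟨Fintype.card ι, fun i => u (e.symm i), fun i => Z (e.symm i), ?_, ?_⟩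
  · rw [iSupIndep_def]
    intro i
    rw [h1 i]
    have h2 : (⨆ (j) (_ : j ≠ i), stanleySpace K (u (e.symm j)) (Z (e.symm j))) =
        Submodule.span K
          (mono '' ⋃ (j) (_ : j ≠ i), StanleyAux.box (u (e.symm j)) (Z (e.symm j))) := by
      simp_rw [h1, ← Submodule.span_iUnion, ← Set.image_iUnion]
    rw [h2]
    refine lin.disjoint_span_image ?_
    rw [Set.disjoint_iUnion_right]
    intro j
    rw [Set.disjoint_iUnion_right]
    intro hji
    exact hdis _ _ (e.symm.injective.ne hji.symm)
  · have h3 : (⨆ j, stanleySpace K (u (e.symm j)) (Z (e.symm j))) =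
        Submodule.span K (mono '' ⋃ j, StanleyAux.box (u (e.symm j)) (Z (e.symm j))) := by
      simp_rw [h1, ← Submodule.span_iUnion, ← Set.image_iUnion]
    rw [h3]
    have h4 : (⋃ j, StanleyAux.box (u (e.symm j)) (Z (e.symm j))) =
        ⋃ i, StanleyAux.box (u i) (Z i) :=
      e.symm.surjective.iUnion_comp (fun i => StanleyAux.box (u i) (Z i))
    rw [h4, hun, hG', ← hE]
    -- span of monomials of I equals I as K-module
    apply le_antisymm
    · rw [Submodule.span_le]
      rintro _ ⟨c, hc, rfl⟩
      exact hc
    · intro p hp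
      have hp' : p ∈ I := hp
      have hsup : ∀ xi ∈ p.support, ∃ g ∈ G0, g ≤ xi := by
        rw [hG0] at hp'
        exact mem_ideal_span_monomial_image.1 hp'
      have hrw : p = ∑ v ∈ p.support, (coeff v p) • mono v := by
        conv_lhs => rw [as_sum p]
        refine Finset.sum_congr rfl fun v _ => ?_
        rw [hmono, smul_monomial, smul_eq_mul, mul_one]
      rw [hrw]
      refine Submodule.sum_mem _ fun v hv => Submodule.smul_mem _ _ (Submodule.subset_span ?_)
      refine ⟨v, ?_, rfl⟩
      rw [Set.mem_setOf_eq, hmono, hG0, mem_ideal_span_monomial_image]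
      intro xi hxi
      rw [support_monomial, if_neg (one_ne_zero : (1 : K) ≠ 0), Finset.mem_singleton] at hxi
      exact hxi ▸ hsup v hv
end

section
/- Let K be a field and S = K[x_1, ..., x_n]. Every squarefree monomial ideal I ⊆ S admits a squarefree Stanley decomposition, i.e., I = ⊕_{i=1}^r u_i K[Z_i] as K-vector spaces, where each u_i is a squarefree monomial, each Z_i ⊆ {x_1, ..., x_n}, and supp(u_i) ⊆ Z_i for every i. -/
open MvPolynomial

/-- The squarefree exponent vector with support `A`. -/
noncomputable def indic {n : ℕ} (A : Finset (Fin n)) : Fin n →₀ ℕ :=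
  Finsupp.onFinset A (fun i => if i ∈ A then 1 else 0)
    (fun i h => by by_contra hc; simp [hc] at h)

lemma indic_apply {n : ℕ} (A : Finset (Fin n)) (i : Fin n) :
    indic A i = if i ∈ A then 1 else 0 := rfl

lemma indic_support {n : ℕ} (A : Finset (Fin n)) : (indic A).support = A := by
  ext i
  by_cases h : i ∈ A <;> simp [Finsupp.mem_support_iff, indic_apply, h]

lemma indic_le {n : ℕ} (d : Fin n →₀ ℕ) : indic d.support ≤ d := by
  intro i
  rw [indic_apply]
  split
  · next h => exact Nat.one_le_iff_ne_zero.2 (Finsupp.mem_support_iff.1 h)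
  · exact Nat.zero_le _

lemma le_indic_of_sqfree {n : ℕ} {g d : Fin n →₀ ℕ} (hg : ∀ i, g i ≤ 1) (h : g ≤ d) :
    g ≤ indic d.support := by
  intro i
  rw [indic_apply]
  by_cases hi : i ∈ d.support
  · simp [hi, hg i]
  · simp only [hi, if_false]
    have : d i = 0 := by simpa [Finsupp.mem_support_iff] using hi
    simpa [this] using h i

lemma stanleySpace_indic_eq (K : Type*) [Field K] {n : ℕ} (A : Finset (Fin n)) :
    stanleySpace K (indic A) A =
      Submodule.span K ((fun d => monomial d (1 : K)) '' {d | d.support = A}) := by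
  unfold stanleySpace
  congr 1
  ext m
  constructor
  · rintro ⟨e, he, rfl⟩
    refine ⟨indic A + e, ?_, rfl⟩
    ext i
    simp only [Finsupp.mem_support_iff, Finsupp.add_apply, indic_apply]
    constructor
    · intro h
      by_contra hi
      have hei : e i = 0 := by
        by_contra hne
        exact hi (he (by simpa [Finsupp.mem_support_iff] using hne))
      simp [hi, hei] at h
    · intro hi
      simp [hi]
  · rintro ⟨d, hd, rfl⟩
    have hle : indic A ≤ d := hd ▸ indic_le d
    refine ⟨d - indic A, ?_, by rw [add_tsub_cancel_of_le hle]⟩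
    intro i hi
    have hi' : i ∈ (d - indic A).support := hi
    have : d i ≠ 0 := by
      intro h0
      have := Finsupp.mem_support_iff.1 hi'
      simp [Finsupp.tsub_apply, h0] at this
    exact hd ▸ (Finsupp.mem_support_iff.2 this)

/-- Every squarefree monomial ideal `I ⊆ S = K[x_1,…,x_n]` admits a
squarefree Stanley decomposition `I = ⊕_{i=1}^r u_i K[Z_i]`: each `u_i` is a squarefree
monomial, `Z_i ⊆ {x_1,…,x_n}` and `supp(u_i) ⊆ Z_i`. -/
theorem squarefreeMonomialIdeal_has_squarefree_stanley_decomposition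
    (K : Type*) [Field K] (n : ℕ)
    (I : Ideal (MvPolynomial (Fin n) K)) (hI : IsSquarefreeMonomialIdeal I) :
    ∃ (r : ℕ) (u : Fin r → (Fin n →₀ ℕ)) (Z : Fin r → Finset (Fin n)),
      (∀ i, (∀ j, u i j ≤ 1) ∧ (u i).support ⊆ Z i) ∧
      iSupIndep (fun i => stanleySpace K (u i) (Z i)) ∧
      (⨆ i, stanleySpace K (u i) (Z i)) = Submodule.restrictScalars K I := by
  classical
  obtain ⟨G, hGsf, hGspan⟩ := hI
  set f : (Fin n →₀ ℕ) → MvPolynomial (Fin n) K := fun d => monomial d (1 : K) with hf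
  -- membership criterion for monomials
  have hmono : ∀ d : Fin n →₀ ℕ, f d ∈ I ↔ ∃ g ∈ G, g ≤ d := by
    intro d
    rw [hGspan, mem_ideal_span_monomial_image]
    simp [hf, support_monomial]
  have hkey : ∀ d : Fin n →₀ ℕ, f d ∈ I ↔ f (indic d.support) ∈ I := by
    intro d
    rw [hmono, hmono]
    constructor
    · rintro ⟨g, hg, hle⟩
      exact ⟨g, hg, le_indic_of_sqfree (hGsf g hg) hle⟩
    · rintro ⟨g, hg, hle⟩
      exact ⟨g, hg, hle.trans (indic_le d)⟩
  -- the index set: supports of monomials in I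
  set good : Finset (Fin n) → Prop := fun A => f (indic A) ∈ I with hgood
  set r : ℕ := Fintype.card {A : Finset (Fin n) // good A} with hr
  set e : {A : Finset (Fin n) // good A} ≃ Fin r := Fintype.equivFin _ with he
  set A : Fin r → Finset (Fin n) := fun i => (e.symm i).1 with hA
  have hAinj : Function.Injective A :=
    Subtype.val_injective.comp e.symm.injective
  have hAgood : ∀ i, good (A i) := fun i => (e.symm i).2
  refine ⟨r, fun i => indic (A i), A, ?_, ?_, ?_⟩
  · intro i
    constructor
    · intro j
      rw [indic_apply]; split <;> omega
    · rw [indic_support]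
  · -- independence
    have hLI : LinearIndependent K f := by
      have := (basisMonomials (Fin n) K).linearIndependent
      rwa [coe_basisMonomials] at this
    rw [iSupIndep_def]
    intro i
    simp only [stanleySpace_indic_eq]
    have hsub : (⨆ j, ⨆ (_ : j ≠ i),
        Submodule.span K ((fun d => monomial d (1 : K)) '' {d | d.support = A j})) ≤
        Submodule.span K ((fun d => monomial d (1 : K)) ''
          (⋃ j, ⋃ (_ : j ≠ i), {d | d.support = A j})) := by
      refine iSup₂_le fun j hj => Submodule.span_mono (Set.image_mono ?_)
      exact Set.subset_iUnion₂ (s := fun j (_ : j ≠ i) => {d : Fin n →₀ ℕ | d.support = A j}) j hj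
    refine Disjoint.mono_right hsub (hLI.disjoint_span_image ?_)
    rw [Set.disjoint_left]
    rintro d hd hd'
    simp only [Set.mem_iUnion] at hd'
    obtain ⟨j, hj, hdj⟩ := hd'
    exact hj (hAinj (hdj.symm.trans hd))
  · -- the sum is I
    simp only [stanleySpace_indic_eq]
    rw [← Submodule.span_iUnion]
    have himg : (⋃ i, (fun d => monomial d (1 : K)) '' {d | d.support = A i}) =
        (fun d => monomial d (1 : K)) '' {d | f d ∈ I} := by
      rw [← Set.image_iUnion]
      refine congrArg _ ?_
      ext d
      simp only [Set.mem_iUnion, Set.mem_setOf_eq]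
      constructor
      · rintro ⟨i, hi⟩
        rw [hkey, hi]
        exact hAgood i
      · intro hd
        have : good d.support := (hkey d).1 hd
        refine ⟨e ⟨d.support, this⟩, ?_⟩
        simp [hA]
    rw [himg]
    apply le_antisymm
    · rw [Submodule.span_le]
      rintro _ ⟨d, hd, rfl⟩
      exact hd
    · intro p hp
      have hp' : ∀ d ∈ p.support, f d ∈ I := by
        intro d hd
        rw [hmono]
        have := hGspan ▸ (Submodule.restrictScalars_mem K I p).1 hp
        exact mem_ideal_span_monomial_image.1 this d hd
      have hrepr : p = ∑ d ∈ p.support, coeff d p • f d := by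
        conv_lhs => rw [as_sum p]
        refine Finset.sum_congr rfl fun d _ => ?_
        rw [hf]
        rw [smul_monomial, smul_eq_mul, mul_one]
      rw [hrepr]
      refine Submodule.sum_mem _ fun d hd => Submodule.smul_mem _ _ ?_
      exact Submodule.subset_span ⟨d, hp' d hd, rfl⟩
end

section
/- Let Δ be a simplicial complex on [n] = {1, ..., n} containing the face {n}, and set Δ_0 = {F ∈ Δ : n ∉ F} and Δ_1 = {F \ {n} : F ∈ Δ, n ∈ F}. If Δ_0 = ⊔_{i=1}^{r_0} [F_i, G_i] is a partition of Δ_0 and Δ_1 = ⊔_{j=1}^{r_1} [F'_j, G'_j] is a partition of Δ_1 (as simplicial complexes on [n-1]), then Δ = (⊔_{i=1}^{r_0} [F_i, G_i]) ⊔ (⊔_{j=1}^{r_1} [F'_j ∪ {n}, G'_j ∪ {n}]) is a partition of Δ. -/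
/-- `Δ` is a simplicial complex on the vertex set `V`: a collection of subsets of `V`
closed under taking subsets. -/
def IsSimplicialComplex {V : Type*} [DecidableEq V] (Δ : Finset (Finset V)) : Prop :=
  ∀ F ∈ Δ, ∀ G ⊆ F, G ∈ Δ

/-- `Δ = ⊔_i [F i, G i]` is a partition of the simplicial complex `Δ` into intervals:
each `[F i, G i] = {H : F i ⊆ H ⊆ G i}` (given by `Finset.Icc`) consists of faces of `Δ`,
the intervals are pairwise disjoint, and their union is `Δ`. -/
def IsPartition {V : Type*} [DecidableEq V] (Δ : Finset (Finset V)) {ι : Type*}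
    (F G : ι → Finset V) : Prop :=
  (∀ i, F i ∈ Δ ∧ G i ∈ Δ ∧ F i ⊆ G i) ∧
  (Pairwise fun i j => Disjoint (Finset.Icc (F i) (G i)) (Finset.Icc (F j) (G j))) ∧
  (∀ H, H ∈ Δ ↔ ∃ i, H ∈ Finset.Icc (F i) (G i))

/-- (Here the vertex set `[n]` is modelled as `Fin (n + 1)` with last
vertex `Fin.last n`.) Let `Δ` be a simplicial complex on `[n]` containing the face `{n}`,
and let `Δ₀ = {F ∈ Δ : n ∉ F}`, `Δ₁ = {F \ {n} : F ∈ Δ, n ∈ F}`. Given partitions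
`Δ₀ = ⊔_{i=1}^{r₀} [Fᵢ, Gᵢ]` and `Δ₁ = ⊔_{j=1}^{r₁} [F'ⱼ, G'ⱼ]`, the family
`(⊔_i [Fᵢ, Gᵢ]) ⊔ (⊔_j [F'ⱼ ∪ {n}, G'ⱼ ∪ {n}])` is a partition of `Δ`. -/
theorem janet_partition_general_case (n : ℕ) (Δ : Finset (Finset (Fin (n + 1))))
    (hΔ : IsSimplicialComplex Δ)
    (hvert : ({Fin.last n} : Finset (Fin (n + 1))) ∈ Δ)
    (Δ₀ Δ₁ : Finset (Finset (Fin (n + 1))))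
    (hΔ₀ : Δ₀ = Δ.filter (fun F => Fin.last n ∉ F))
    (hΔ₁ : Δ₁ = (Δ.filter (fun F => Fin.last n ∈ F)).image (fun F => F.erase (Fin.last n)))
    (r₀ r₁ : ℕ) (F G : Fin r₀ → Finset (Fin (n + 1)))
    (F' G' : Fin r₁ → Finset (Fin (n + 1)))
    (h₀ : IsPartition Δ₀ F G) (h₁ : IsPartition Δ₁ F' G') :
    IsPartition Δ
      (Sum.elim F (fun j => insert (Fin.last n) (F' j)))
      (Sum.elim G (fun j => insert (Fin.last n) (G' j)) : Fin r₀ ⊕ Fin r₁ → _) := by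
  obtain ⟨h₀mem, h₀disj, h₀cov⟩ := h₀
  obtain ⟨h₁mem, h₁disj, h₁cov⟩ := h₁
  have hΔ₀sub : ∀ H ∈ Δ₀, H ∈ Δ ∧ Fin.last n ∉ H := by
    intro H hH; rw [hΔ₀, Finset.mem_filter] at hH; exact hH
  have key : ∀ H ∈ Δ₁, Fin.last n ∉ H ∧ insert (Fin.last n) H ∈ Δ := by
    intro H hH
    rw [hΔ₁, Finset.mem_image] at hH
    obtain ⟨K, hK, rfl⟩ := hH
    rw [Finset.mem_filter] at hK
    refine ⟨Finset.notMem_erase _ _, ?_⟩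
    rw [Finset.insert_erase hK.2]; exact hK.1
  have memL : ∀ i H, H ∈ Finset.Icc (F i) (G i) → Fin.last n ∉ H := by
    intro i H hH hn
    rw [Finset.mem_Icc] at hH
    exact (hΔ₀sub _ (h₀mem i).2.1).2 (hH.2 hn)
  have memR : ∀ j H, H ∈ Finset.Icc (insert (Fin.last n) (F' j)) (insert (Fin.last n) (G' j)) →
      Fin.last n ∈ H ∧ H.erase (Fin.last n) ∈ Finset.Icc (F' j) (G' j) := by
    intro j H hH
    rw [Finset.mem_Icc] at hH
    have hn : Fin.last n ∈ H := hH.1 (Finset.mem_insert_self _ _)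
    refine ⟨hn, Finset.mem_Icc.2 ⟨?_, ?_⟩⟩
    · intro x hx
      refine Finset.mem_erase.2 ⟨?_, hH.1 (Finset.mem_insert_of_mem hx)⟩
      rintro rfl; exact (key _ (h₁mem j).1).1 hx
    · intro x hx
      rcases Finset.mem_insert.1 (hH.2 (Finset.mem_erase.1 hx).2) with h | h
      · exact absurd h (Finset.mem_erase.1 hx).1
      · exact h
  refine ⟨?_, ?_, ?_⟩
  · rintro (i | j)
    · exact ⟨(hΔ₀sub _ (h₀mem i).1).1, (hΔ₀sub _ (h₀mem i).2.1).1, (h₀mem i).2.2⟩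
    · exact ⟨(key _ (h₁mem j).1).2, (key _ (h₁mem j).2.1).2,
        Finset.insert_subset_insert _ (h₁mem j).2.2⟩
  · rintro (i | j) (i' | j') hne
    · exact h₀disj (by simpa using hne)
    · simp only [Sum.elim_inl, Sum.elim_inr]
      rw [Finset.disjoint_left]
      intro H h1 h2
      exact memL i H h1 (memR j' H h2).1
    · simp only [Sum.elim_inl, Sum.elim_inr]
      rw [Finset.disjoint_left]
      intro H h1 h2
      exact memL i' H h2 (memR j H h1).1
    · simp only [Sum.elim_inr]
      rw [Finset.disjoint_left]
      intro H h1 h2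
      have hjj : j ≠ j' := by rintro rfl; exact hne rfl
      exact Finset.disjoint_left.1 (h₁disj hjj) (memR j H h1).2 (memR j' H h2).2
  · intro H
    constructor
    · intro hH
      by_cases hn : Fin.last n ∈ H
      · have hH1 : H.erase (Fin.last n) ∈ Δ₁ := by
          rw [hΔ₁, Finset.mem_image]
          exact ⟨H, Finset.mem_filter.2 ⟨hH, hn⟩, rfl⟩
        obtain ⟨j, hj⟩ := (h₁cov _).1 hH1
        rw [Finset.mem_Icc] at hj
        refine ⟨Sum.inr j, Finset.mem_Icc.2 ⟨?_, ?_⟩⟩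
        · exact Finset.insert_subset hn (hj.1.trans (Finset.erase_subset _ _))
        · intro x hx
          by_cases hx' : x = Fin.last n
          · subst hx'; exact Finset.mem_insert_self _ _
          · exact Finset.mem_insert_of_mem (hj.2 (Finset.mem_erase.2 ⟨hx', hx⟩))
      · have hH0 : H ∈ Δ₀ := by rw [hΔ₀, Finset.mem_filter]; exact ⟨hH, hn⟩
        obtain ⟨i, hi⟩ := (h₀cov _).1 hH0
        exact ⟨Sum.inl i, hi⟩
    · rintro ⟨i | j, hi⟩
      · exact (hΔ₀sub _ ((h₀cov H).2 ⟨i, hi⟩)).1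
      · exact hΔ _ (key _ (h₁mem j).2.1).2 _ (Finset.mem_Icc.1 hi).2
end

section
/- Let K be a field, S = K[x_1, ..., x_n] with n ≥ 2, and I ⊆ S a monomial ideal with stabilization index β (i.e., β is minimal with I_γ = I_β for all γ ≥ β, where I ∩ x_n^k K[x_1, ..., x_{n-1}] = x_n^k I_k). If for each k with 0 ≤ k ≤ β the ideal I_k has a Stanley decomposition I_k = ⊕_{i=1}^{r_k} u_{i,k} K[Z_{i,k}] with Z_{i,k} ⊆ {x_1, ..., x_{n-1}}, then I = (⊕_{0 ≤ k < β} ⊕_{i=1}^{r_k} u_{i,k} x_n^k K[Z_{i,k}]) ⊕ (⊕_{i=1}^{r_β} u_{i,β} x_n^β K[Z_{i,β} ∪ {x_n}]) is a Stanley decomposition of I. -/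
open MvPolynomial

/-- The Stanley space `u_{i,k} x_{n+1}^k K[Z']` appearing in Janet's algorithm, where the
exponent vector of `u_{i,k}` is pushed from `Fin n` into `Fin (n+1)` and the exponent `k`
of the last variable is added. -/
noncomputable def janetPiece (K : Type*) [Field K] (n : ℕ) (k : ℕ) (d : Fin n →₀ ℕ)
    (Z : Finset (Fin (n + 1))) : Submodule K (MvPolynomial (Fin (n + 1)) K) :=
  stanleySpace K
    (Finsupp.mapDomain (Fin.castSucc : Fin n → Fin (n + 1)) d +
      Finsupp.single (Fin.last n) k) Z

noncomputable def mset (K : Type*) [Field K] {σ : Type*} (s : Set (σ →₀ ℕ)) :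
    Submodule K (MvPolynomial σ K) :=
  Submodule.span K ((fun d => monomial d (1 : K)) '' s)

lemma mem_mset {K : Type*} [Field K] {σ : Type*} {s : Set (σ →₀ ℕ)}
    {p : MvPolynomial σ K} : p ∈ mset K s ↔ ↑p.support ⊆ s := by
  rw [mset, ← coe_basisMonomials, show ((fun d => (basisMonomials σ K) d) '' s) = ⇑(basisMonomials σ K) '' s from rfl,
    Module.Basis.mem_span_image]
  rfl

lemma monomial_mem_mset {K : Type*} [Field K] {σ : Type*} {s : Set (σ →₀ ℕ)}
    {d : σ →₀ ℕ} : monomial d (1 : K) ∈ mset K s ↔ d ∈ s := by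
  classical
  rw [mem_mset, support_monomial, if_neg one_ne_zero]
  simp

lemma mset_injective {K : Type*} [Field K] {σ : Type*} {s t : Set (σ →₀ ℕ)}
    (h : mset K s = mset K t) : s = t := by
  ext d
  rw [← @monomial_mem_mset K _ _ s d, ← @monomial_mem_mset K _ _ t d, h]

lemma mset_mono {K : Type*} [Field K] {σ : Type*} {s t : Set (σ →₀ ℕ)}
    (h : s ⊆ t) : mset K s ≤ mset K t :=
  Submodule.span_mono (Set.image_mono h)

lemma mset_iUnion {K : Type*} [Field K] {σ : Type*} {ι : Sort*} (S : ι → Set (σ →₀ ℕ)) :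
    (⨆ i, mset K (S i)) = mset K (⋃ i, S i) := by
  simp only [mset, Set.image_iUnion, Submodule.span_iUnion]

lemma mset_iSupIndep {K : Type*} [Field K] {σ : Type*} {ι : Type*} (S : ι → Set (σ →₀ ℕ))
    (h : Pairwise (Function.onFun Disjoint S)) :
    iSupIndep (fun i => mset K (S i)) := by
  intro i
  rw [Submodule.disjoint_def]
  intro x hx hx'
  have h2 : x ∈ mset K (⋃ j, ⋃ _ : j ≠ i, S j) :=
    iSup₂_le (fun j hj => mset_mono (by exact Set.subset_iUnion₂ (s := fun j _ => S j) j hj)) hx'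
  rw [mem_mset] at hx h2
  by_contra hx0
  obtain ⟨d, hd⟩ := (MvPolynomial.support_nonempty.2 hx0)
  obtain ⟨j, hj, hdj⟩ := by simpa using h2 (Finset.mem_coe.2 hd)
  exact Set.disjoint_left.1 (h hj) hdj (hx (Finset.mem_coe.2 hd))

noncomputable abbrev shf (n k : ℕ) (d : Fin n →₀ ℕ) : Fin (n+1) →₀ ℕ :=
  Finsupp.mapDomain (Fin.castSucc : Fin n → Fin (n+1)) d + Finsupp.single (Fin.last n) k

lemma last_notin_range (n : ℕ) : Fin.last n ∉ Set.range (Fin.castSucc : Fin n → Fin (n+1)) := by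
  rintro ⟨i, hi⟩
  exact absurd hi (Fin.castSucc_lt_last i).ne

lemma shf_apply_last {n k : ℕ} (d : Fin n →₀ ℕ) : shf n k d (Fin.last n) = k := by
  simp [shf, Finsupp.mapDomain_notin_range _ _ (last_notin_range n)]

lemma shf_apply_castSucc {n k : ℕ} (d : Fin n →₀ ℕ) (i : Fin n) :
    shf n k d i.castSucc = d i := by
  have h1 : (Finsupp.single (Fin.last n) k) i.castSucc = 0 :=
    Finsupp.single_eq_of_ne' (Fin.castSucc_lt_last i).ne'
  simp [shf, Finsupp.mapDomain_apply (Fin.castSucc_injective n), h1]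

lemma shf_inj {n k k' : ℕ} {d d' : Fin n →₀ ℕ} (h : shf n k d = shf n k' d') :
    k = k' ∧ d = d' := by
  constructor
  · rw [← shf_apply_last (k := k) d, ← shf_apply_last (k := k') d', h]
  · ext i
    rw [← shf_apply_castSucc (k := k) d, ← shf_apply_castSucc (k := k') d', h]

noncomputable def down {n : ℕ} (D : Fin (n+1) →₀ ℕ) : Fin n →₀ ℕ :=
  Finsupp.comapDomain Fin.castSucc D (Fin.castSucc_injective n).injOn

lemma down_apply {n : ℕ} (D : Fin (n+1) →₀ ℕ) (i : Fin n) : down D i = D i.castSucc := rfl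

lemma shf_down {n : ℕ} (D : Fin (n+1) →₀ ℕ) : shf n (D (Fin.last n)) (down D) = D := by
  ext i
  induction i using Fin.lastCases with
  | last => exact shf_apply_last _
  | cast i => rw [shf_apply_castSucc, down_apply]

lemma down_shf {n k : ℕ} (d : Fin n →₀ ℕ) : down (shf n k d) = d := by
  ext i; rw [down_apply, shf_apply_castSucc]

lemma shf_add {n k j : ℕ} (d : Fin n →₀ ℕ) (e : Fin n →₀ ℕ) :
    shf n k d + (Finsupp.mapDomain Fin.castSucc e + Finsupp.single (Fin.last n) j)
      = shf n (k + j) (d + e) := by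
  simp only [shf, Finsupp.mapDomain_add, Finsupp.single_add]
  abel

lemma support_shf_sub {n k : ℕ} (e : Fin n →₀ ℕ) {Z : Finset (Fin n)}
    (h : (e.support : Set (Fin n)) ⊆ ↑Z) :
    (((Finsupp.mapDomain (Fin.castSucc : Fin n → Fin (n+1)) e
        + Finsupp.single (Fin.last n) k).support : Set (Fin (n+1))))
      ⊆ ↑(insert (Fin.last n) (Z.image Fin.castSucc)) := by
  intro a ha
  have := Finsupp.support_add (g₁ := Finsupp.mapDomain (Fin.castSucc : Fin n → Fin (n+1)) e)
    (g₂ := Finsupp.single (Fin.last n) k) (Finset.mem_coe.1 ha)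
  rw [Finset.mem_union] at this
  simp only [Finset.coe_insert, Set.mem_insert_iff, Finset.coe_image, Set.mem_image]
  rcases this with h1 | h1
  · rw [Finsupp.mapDomain_support_of_injective (Fin.castSucc_injective n)] at h1
    obtain ⟨i, hi, rfl⟩ := Finset.mem_image.1 h1
    exact Or.inr ⟨i, h (Finset.mem_coe.2 hi), rfl⟩
  · exact Or.inl (Finset.mem_singleton.1 (Finsupp.support_single_subset h1))

def Aset {σ : Type*} (d : σ →₀ ℕ) (Z : Finset σ) : Set (σ →₀ ℕ) :=
  {D | ∃ e : σ →₀ ℕ, (e.support : Set σ) ⊆ ↑Z ∧ D = d + e}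

lemma stanleySpace_eq_mset (K : Type*) [Field K] {σ : Type*} (d : σ →₀ ℕ) (Z : Finset σ) :
    stanleySpace K d Z = mset K (Aset d Z) := by
  rw [stanleySpace, mset]
  congr 1
  ext m
  constructor
  · rintro ⟨e, he, rfl⟩; exact ⟨d + e, ⟨e, he, rfl⟩, rfl⟩
  · rintro ⟨D, ⟨e, he, rfl⟩, rfl⟩; exact ⟨e, he, rfl⟩

lemma monomialIdeal_eq_mset {K : Type*} [Field K] {σ : Type*}
    {I : Ideal (MvPolynomial σ K)} (hI : IsMonomialIdeal I) :
    Submodule.restrictScalars K I = mset K {d | monomial d (1 : K) ∈ I} := by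
  obtain ⟨G, hG⟩ := hI
  apply le_antisymm
  · intro p hp
    rw [Submodule.restrictScalars_mem, hG, mem_ideal_span_monomial_image] at hp
    rw [mem_mset]
    intro d hd
    rw [Set.mem_setOf_eq, hG, mem_ideal_span_monomial_image]
    intro xi hxi
    classical
    rw [support_monomial, if_neg one_ne_zero, Finset.mem_singleton] at hxi
    subst hxi
    exact hp _ (Finset.mem_coe.1 hd)
  · rw [mset, Submodule.span_le]
    rintro m ⟨d, hd, rfl⟩
    exact hd

lemma top_eq_mset (K : Type*) [Field K] (σ : Type*) :
    (⊤ : Submodule K (MvPolynomial σ K)) = mset K Set.univ := by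
  rw [mset, Set.image_univ]
  exact ((basisMonomials σ K).span_eq).symm

lemma shiftUp_mset (K : Type*) [Field K] (n k : ℕ) (s : Set (Fin n →₀ ℕ)) :
    shiftUp K n k (mset K s) = mset K (shf n k '' s) := by
  rw [shiftUp, mset, mset, Submodule.map_span, Submodule.map_span]
  congr 1
  rw [← Set.image_comp, ← Set.image_comp, Set.image_image]
  apply Set.image_congr
  intro d _
  show (X (Fin.last n) : MvPolynomial (Fin (n+1)) K) ^ k * rename Fin.castSucc (monomial d 1)
      = monomial (shf n k d) 1
  rw [rename_monomial, X_pow_eq_monomial, monomial_mul, one_mul, shf]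
  exact congrArg (fun D => monomial D (1:K)) (add_comm _ _)

lemma mset_disjoint {K : Type*} [Field K] {σ : Type*} {s t : Set (σ →₀ ℕ)}
    (h : Disjoint (mset K s) (mset K t)) : Disjoint s t := by
  rw [Set.disjoint_left]
  intro d hs ht
  have h0 := Submodule.disjoint_def.1 h (monomial d (1 : K))
    (monomial_mem_mset.2 hs) (monomial_mem_mset.2 ht)
  exact one_ne_zero ((MvPolynomial.monomial_eq_zero).1 h0)

lemma shf_add' {n k : ℕ} (d e : Fin n →₀ ℕ) :
    shf n k d + Finsupp.mapDomain Fin.castSucc e = shf n k (d + e) := by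
  simp only [shf, Finsupp.mapDomain_add]
  abel

lemma supp_down_sub {n : ℕ} {e : Fin (n+1) →₀ ℕ} {Z : Finset (Fin n)}
    (he : (e.support : Set (Fin (n+1))) ⊆ ↑(insert (Fin.last n) (Z.image Fin.castSucc))) :
    ((down e).support : Set (Fin n)) ⊆ (↑Z : Set (Fin n)) := by
  intro i hi
  have h1 : e i.castSucc ≠ 0 := by
    have := Finsupp.mem_support_iff.1 (Finset.mem_coe.1 hi)
    rwa [down_apply] at this
  have h2 := he (Finset.mem_coe.2 (Finsupp.mem_support_iff.2 h1))
  simp only [Finset.coe_insert, Set.mem_insert_iff, Finset.coe_image, Set.mem_image,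
    Finset.mem_coe] at h2
  rcases h2 with h2 | ⟨z, hz, hz2⟩
  · exact absurd h2 (Fin.castSucc_lt_last i).ne
  · rwa [← Fin.castSucc_injective n hz2]

lemma janetPiece_castSucc (K : Type*) [Field K] (n k : ℕ) (d : Fin n →₀ ℕ)
    (Z : Finset (Fin n)) :
    janetPiece K n k d (Z.image Fin.castSucc) = mset K (shf n k '' Aset d Z) := by
  rw [show janetPiece K n k d (Z.image Fin.castSucc)
      = stanleySpace K (shf n k d) (Z.image Fin.castSucc) from rfl, stanleySpace_eq_mset]
  congr 1
  ext D
  constructor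
  · rintro ⟨e, he, rfl⟩
    have he' : (e.support : Set (Fin (n+1))) ⊆ ↑(insert (Fin.last n) (Z.image Fin.castSucc)) :=
      he.trans (by simp [Finset.coe_subset])
    have hel : e (Fin.last n) = 0 := by
      by_contra h0
      have h2 := he (Finset.mem_coe.2 (Finsupp.mem_support_iff.2 h0))
      simp only [Finset.coe_image, Set.mem_image, Finset.mem_coe] at h2
      obtain ⟨z, _, hz⟩ := h2
      exact absurd hz (Fin.castSucc_lt_last z).ne
    have he2 : Finsupp.mapDomain Fin.castSucc (down e) = e := by
      ext i
      induction i using Fin.lastCases with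
      | last => rw [Finsupp.mapDomain_notin_range _ _ (last_notin_range n), hel]
      | cast i => rw [Finsupp.mapDomain_apply (Fin.castSucc_injective n), down_apply]
    exact ⟨d + down e, ⟨down e, supp_down_sub he', rfl⟩, by rw [← shf_add', he2]⟩
  · rintro ⟨D', ⟨e, he, rfl⟩, rfl⟩
    refine ⟨Finsupp.mapDomain Fin.castSucc e, ?_, (shf_add' d e).symm⟩
    rw [Finsupp.mapDomain_support_of_injective (Fin.castSucc_injective n)]
    intro a ha
    simp only [Finset.coe_image, Set.mem_image, Finset.mem_coe] at ha ⊢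
    obtain ⟨i, hi, rfl⟩ := ha
    exact ⟨i, he (Finset.mem_coe.2 hi), rfl⟩

lemma janetPiece_insert (K : Type*) [Field K] (n β : ℕ) (d : Fin n →₀ ℕ)
    (Z : Finset (Fin n)) :
    janetPiece K n β d (insert (Fin.last n) (Z.image Fin.castSucc))
      = mset K (⋃ j : ℕ, shf n (β + j) '' Aset d Z) := by
  rw [show janetPiece K n β d (insert (Fin.last n) (Z.image Fin.castSucc))
      = stanleySpace K (shf n β d) (insert (Fin.last n) (Z.image Fin.castSucc)) from rfl,
    stanleySpace_eq_mset]
  congr 1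
  ext D
  simp only [Set.mem_iUnion]
  constructor
  · rintro ⟨e, he, rfl⟩
    refine ⟨e (Fin.last n), d + down e, ⟨down e, supp_down_sub he, rfl⟩, ?_⟩
    have h4 := shf_add (k := β) (j := e (Fin.last n)) d (down e)
    rw [show Finsupp.mapDomain Fin.castSucc (down e)
        + Finsupp.single (Fin.last n) (e (Fin.last n)) = e from shf_down e] at h4
    exact h4.symm
  · rintro ⟨j, D', ⟨e, he, rfl⟩, rfl⟩
    exact ⟨Finsupp.mapDomain Fin.castSucc e + Finsupp.single (Fin.last n) j,
      support_shf_sub e he, (shf_add d e).symm⟩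

/-- (Here `S = K[x_1,…,x_{n+1}]`, `S' = K[x_1,…,x_n]`, `n ≥ 1`.) Let
`I ⊆ S` be a monomial ideal whose slices `I_k` (determined by
`I ∩ x_{n+1}^k S' = x_{n+1}^k I_k`) stabilize exactly at `β`. If every `I_k` with
`k ≤ β` has a Stanley decomposition `I_k = ⊕_{i=1}^{r_k} u_{i,k} K[Z_{i,k}]`, then
`I = (⊕_{0 ≤ k < β} ⊕_i u_{i,k} x_{n+1}^k K[Z_{i,k}]) ⊕
(⊕_i u_{i,β} x_{n+1}^β K[Z_{i,β} ∪ {x_{n+1}}])` is a Stanley decomposition of `I`. -/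
theorem janet_stanley_decomposition (K : Type*) [Field K] (n : ℕ) (hn : 1 ≤ n)
    (I : Ideal (MvPolynomial (Fin (n + 1)) K)) (hI : IsMonomialIdeal I)
    (Ik : ℕ → Ideal (MvPolynomial (Fin n) K)) (hIkmono : ∀ k, IsMonomialIdeal (Ik k))
    (hIk : ∀ k, Submodule.restrictScalars K I ⊓ shiftUp K n k ⊤ =
      shiftUp K n k (Submodule.restrictScalars K (Ik k)))
    (β : ℕ) (hstab : ∀ γ, β ≤ γ → Ik γ = Ik β)
    (hmin : ∀ β' < β, ¬ (∀ γ, β' ≤ γ → Ik γ = Ik β'))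
    (r : ℕ → ℕ) (u : ∀ k, Fin (r k) → (Fin n →₀ ℕ)) (Z : ∀ k, Fin (r k) → Finset (Fin n))
    (hdec : ∀ k ≤ β, iSupIndep (fun i => stanleySpace K (u k i) (Z k i)) ∧
      (⨆ i, stanleySpace K (u k i) (Z k i)) = Submodule.restrictScalars K (Ik k)) :
    iSupIndep (fun x : (Σ k : Fin β, Fin (r k)) ⊕ Fin (r β) =>
      Sum.elim
        (fun p : Σ k : Fin β, Fin (r k) =>
          janetPiece K n (p.1 : ℕ) (u (p.1 : ℕ) p.2)
            ((Z (p.1 : ℕ) p.2).image Fin.castSucc))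
        (fun i : Fin (r β) =>
          janetPiece K n β (u β i)
            (insert (Fin.last n) ((Z β i).image Fin.castSucc))) x) ∧
    (⨆ x : (Σ k : Fin β, Fin (r k)) ⊕ Fin (r β),
      Sum.elim
        (fun p : Σ k : Fin β, Fin (r k) =>
          janetPiece K n (p.1 : ℕ) (u (p.1 : ℕ) p.2)
            ((Z (p.1 : ℕ) p.2).image Fin.castSucc))
        (fun i : Fin (r β) =>
          janetPiece K n β (u β i)
            (insert (Fin.last n) ((Z β i).image Fin.castSucc))) x) =
      Submodule.restrictScalars K I := by
  classical
  set E : ℕ → Set (Fin n →₀ ℕ) := fun k => {d | monomial d (1:K) ∈ Ik k} with hE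
  set E' : Set (Fin (n+1) →₀ ℕ) := {D | monomial D (1:K) ∈ I} with hE'def
  have hIm : Submodule.restrictScalars K I = mset K E' := monomialIdeal_eq_mset hI
  have hIkm : ∀ k, Submodule.restrictScalars K (Ik k) = mset K (E k) :=
    fun k => monomialIdeal_eq_mset (hIkmono k)
  have hEstab : ∀ j : ℕ, E (β + j) = E β := by
    intro j
    have h1 := hstab (β + j) (Nat.le_add_right β j)
    simp only [hE, h1]
  have hAE : ∀ k, k ≤ β → (⋃ i, Aset (u k i) (Z k i)) = E k := by
    intro k hk
    have h1 := (hdec k hk).2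
    rw [hIkm k] at h1
    simp only [stanleySpace_eq_mset] at h1
    rw [mset_iUnion] at h1
    exact mset_injective h1
  have hAdis : ∀ k, k ≤ β → ∀ i i' : Fin (r k), i ≠ i' →
      Disjoint (Aset (u k i) (Z k i)) (Aset (u k i') (Z k i')) := by
    intro k hk i i' hii
    have h1 := (hdec k hk).1.pairwiseDisjoint hii
    simp only [Function.onFun, stanleySpace_eq_mset] at h1
    exact mset_disjoint h1
  have hbridge : ∀ (k : ℕ) (d : Fin n →₀ ℕ), shf n k d ∈ E' ↔ d ∈ E k := by
    intro k d
    have h := hIk k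
    rw [hIm, hIkm k, top_eq_mset K (Fin n), shiftUp_mset, shiftUp_mset] at h
    constructor
    · intro hd
      have hm : monomial (shf n k d) (1:K) ∈ mset K E' ⊓ mset K (shf n k '' Set.univ) :=
        ⟨monomial_mem_mset.2 hd, monomial_mem_mset.2 ⟨d, trivial, rfl⟩⟩
      rw [h] at hm
      obtain ⟨d', hd', heq⟩ := monomial_mem_mset.1 hm
      obtain ⟨-, rfl⟩ := shf_inj heq
      exact hd'
    · intro hd
      have hm : monomial (shf n k d) (1:K) ∈ mset K (shf n k '' E k) :=
        monomial_mem_mset.2 ⟨d, hd, rfl⟩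
      rw [← h] at hm
      exact monomial_mem_mset.1 hm.1
  have hfun : (fun x : (Σ k : Fin β, Fin (r k)) ⊕ Fin (r β) =>
      Sum.elim
        (fun p : Σ k : Fin β, Fin (r k) =>
          janetPiece K n (p.1 : ℕ) (u (p.1 : ℕ) p.2)
            ((Z (p.1 : ℕ) p.2).image Fin.castSucc))
        (fun i : Fin (r β) =>
          janetPiece K n β (u β i)
            (insert (Fin.last n) ((Z β i).image Fin.castSucc))) x)
      = fun x => mset K (Sum.elim
        (fun p : Σ k : Fin β, Fin (r k) =>
          shf n (p.1 : ℕ) '' Aset (u (p.1 : ℕ) p.2) (Z (p.1 : ℕ) p.2))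
        (fun i : Fin (r β) =>
          ⋃ j : ℕ, shf n (β + j) '' Aset (u β i) (Z β i)) x) := by
    funext x
    rcases x with ⟨k, i⟩ | i
    · exact janetPiece_castSucc K n (k : ℕ) (u k i) (Z k i)
    · exact janetPiece_insert K n β (u β i) (Z β i)
  rw [hfun]
  constructor
  · apply mset_iSupIndep
    intro x y hxy
    rw [Function.onFun, Set.disjoint_left]
    rcases x with ⟨k, i⟩ | i <;> rcases y with ⟨k', i'⟩ | i'
    · rintro D ⟨a, ha, rfl⟩ hD'
      simp only [Sum.elim_inl] at hD'
      obtain ⟨a', ha', heq⟩ := hD'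
      obtain ⟨hk, rfl⟩ := shf_inj heq
      have hkk : k' = k := Fin.val_injective hk
      subst hkk
      have hii : i ≠ i' := fun h => hxy (by rw [h])
      exact Set.disjoint_left.1 (hAdis (k' : ℕ) k'.2.le i i' hii) ha ha'
    · rintro D ⟨a, ha, rfl⟩ hD'
      simp only [Sum.elim_inr, Set.mem_iUnion] at hD'
      obtain ⟨j, a', ha', heq⟩ := hD'
      obtain ⟨hk, -⟩ := shf_inj heq
      have := k.2
      omega
    · rintro D hD hD'
      simp only [Sum.elim_inl] at hD'
      simp only [Sum.elim_inr, Set.mem_iUnion] at hD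
      obtain ⟨j, a, ha, rfl⟩ := hD
      obtain ⟨a', ha', heq⟩ := hD'
      obtain ⟨hk, -⟩ := shf_inj heq
      have := k'.2
      omega
    · rintro D hD hD'
      simp only [Sum.elim_inr, Set.mem_iUnion] at hD hD'
      obtain ⟨j, a, ha, rfl⟩ := hD
      obtain ⟨j', a', ha', heq⟩ := hD'
      obtain ⟨hk, rfl⟩ := shf_inj heq
      have hii : i ≠ i' := fun h => hxy (by rw [h])
      exact Set.disjoint_left.1 (hAdis β le_rfl i i' hii) ha ha'
  · rw [mset_iUnion, hIm]
    have hE'u : E' = ⋃ k : ℕ, shf n k '' E k := by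
      ext D
      simp only [Set.mem_iUnion]
      constructor
      · intro hD
        exact ⟨D (Fin.last n), down D, (hbridge _ _).1 (by rw [shf_down]; exact hD),
          shf_down D⟩
      · rintro ⟨k, dd, hd, rfl⟩
        exact (hbridge k dd).2 hd
    have hset : (⋃ x : (Σ k : Fin β, Fin (r k)) ⊕ Fin (r β), Sum.elim
        (fun p : Σ k : Fin β, Fin (r k) =>
          shf n (p.1 : ℕ) '' Aset (u (p.1 : ℕ) p.2) (Z (p.1 : ℕ) p.2))
        (fun i : Fin (r β) =>
          ⋃ j : ℕ, shf n (β + j) '' Aset (u β i) (Z β i)) x) = E' := by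
      rw [hE'u]
      ext D
      simp only [Set.mem_iUnion]
      constructor
      · rintro ⟨x, hx⟩
        rcases x with ⟨k, i⟩ | i
        · simp only [Sum.elim_inl] at hx
          obtain ⟨a, ha, rfl⟩ := hx
          refine ⟨(k : ℕ), a, ?_, rfl⟩
          rw [← hAE (k : ℕ) k.2.le]
          exact Set.mem_iUnion.2 ⟨i, ha⟩
        · simp only [Sum.elim_inr, Set.mem_iUnion] at hx
          obtain ⟨j, a, ha, rfl⟩ := hx
          refine ⟨β + j, a, ?_, rfl⟩
          rw [hEstab j, ← hAE β le_rfl]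
          exact Set.mem_iUnion.2 ⟨i, ha⟩
      · rintro ⟨k, a, ha, rfl⟩
        by_cases hk : k < β
        · rw [← hAE k hk.le] at ha
          obtain ⟨i, hai⟩ := Set.mem_iUnion.1 ha
          exact ⟨Sum.inl ⟨⟨k, hk⟩, i⟩, ⟨a, hai, rfl⟩⟩
        · push_neg at hk
          have ha2 : a ∈ E β := by
            have h1 := hEstab (k - β)
            rw [show β + (k - β) = k from by omega] at h1
            rw [← h1]
            exact ha
          rw [← hAE β le_rfl] at ha2
          obtain ⟨i, hai⟩ := Set.mem_iUnion.1 ha2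
          refine ⟨Sum.inr i, ?_⟩
          simp only [Sum.elim_inr, Set.mem_iUnion]
          exact ⟨k - β, a, hai, by rw [show β + (k - β) = k from by omega]⟩
    rw [hset]
end
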